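/- Let p ∈ [1,∞), let I be a nonempty set, and let f, g ∈ ℓ^p(I)^+. If f ≺_s g and g ≺_w f, then f ≺ g. -/

import Mathlib

open scoped ENNReal BigOperators

noncomputable section

/-- ℓᵖ(I) with real scalars. -/
abbrev Lp (I : Type*) (p : ℝ≥0∞) := lp (fun _ : I => ℝ) p

/-- The standard basis vector `e_j` of `ℓᵖ(I)`. -/
def stdVec {I : Type*} (p : ℝ≥0∞) (j : I) : Lp I p :=
  haveI := Classical.decEq I
  lp.single p j 1

/-- A bounded operator on ℓᵖ(I) is positive if it maps the positive cone into itself. -/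
def IsPos {I : Type*} {p : ℝ≥0∞} [Fact (1 ≤ p)] (A : Lp I p →L[ℝ] Lp I p) : Prop :=
  ∀ f : Lp I p, (∀ i, 0 ≤ f i) → ∀ i, 0 ≤ A f i

/-- Doubly stochastic operator on ℓᵖ(I). -/
def DoublyStochastic {I : Type*} {p : ℝ≥0∞} [Fact (1 ≤ p)]
    (A : Lp I p →L[ℝ] Lp I p) : Prop :=
  IsPos A ∧ (∀ i : I, HasSum (fun j : I => A (stdVec p j) i) 1)
          ∧ (∀ j : I, HasSum (fun i : I => A (stdVec p j) i) 1)

/-- Doubly substochastic operator on ℓᵖ(I) (finite partial sums formulation). -/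
def DoublySubstochastic {I : Type*} {p : ℝ≥0∞} [Fact (1 ≤ p)]
    (A : Lp I p →L[ℝ] Lp I p) : Prop :=
  IsPos A ∧ (∀ i : I, ∀ s : Finset I, ∑ j ∈ s, A (stdVec p j) i ≤ 1)
          ∧ (∀ j : I, ∀ s : Finset I, ∑ i ∈ s, A (stdVec p j) i ≤ 1)

/-- Increasable doubly substochastic operator on ℓᵖ(I). -/
def IncreasableDsS {I : Type*} {p : ℝ≥0∞} [Fact (1 ≤ p)]
    (A : Lp I p →L[ℝ] Lp I p) : Prop :=
  IsPos A ∧ ∃ A₁ : Lp I p →L[ℝ] Lp I p, DoublyStochastic A₁ ∧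
    ∀ i j : I, A (stdVec p j) i ≤ A₁ (stdVec p j) i

/-- Majorization: `f ≺ g`. -/
def Maj {I : Type*} {p : ℝ≥0∞} [Fact (1 ≤ p)] (f g : Lp I p) : Prop :=
  ∃ D : Lp I p →L[ℝ] Lp I p, DoublyStochastic D ∧ f = D g

/-- Weak majorization: `f ≺_w g`. -/
def MajW {I : Type*} {p : ℝ≥0∞} [Fact (1 ≤ p)] (f g : Lp I p) : Prop :=
  ∃ D : Lp I p →L[ℝ] Lp I p, DoublySubstochastic D ∧ f = D g

/-- Submajorization: `f ≺_s g`. -/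
def MajS {I : Type*} {p : ℝ≥0∞} [Fact (1 ≤ p)] (f g : Lp I p) : Prop :=
  ∃ D : Lp I p →L[ℝ] Lp I p, IncreasableDsS D ∧ f = D g

/-- Permutation operator on ℓᵖ(I). -/
def IsPermutationOp {I : Type*} {p : ℝ≥0∞} [Fact (1 ≤ p)]
    (P : Lp I p →L[ℝ] Lp I p) : Prop :=
  ∃ θ : I ≃ I, ∀ j : I, P (stdVec p j) = stdVec p (θ j)

/-- `P` is the operator `P_θ` associated with the injection `θ : I → I`,
i.e. `P f = ∑_{k ∈ I} f(k) e_{θ(k)}`. -/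
def IsPTheta {I : Type*} {p : ℝ≥0∞} [Fact (1 ≤ p)] (θ : I → I)
    (P : Lp I p →L[ℝ] Lp I p) : Prop :=
  (∀ f : Lp I p, ∀ k : I, P f (θ k) = f k) ∧
  (∀ f : Lp I p, ∀ i : I, i ∉ Set.range θ → P f i = 0)

/-- `T` preserves weak majorization on the positive cone. -/
def PreservesMajW {I : Type*} {p : ℝ≥0∞} [Fact (1 ≤ p)]
    (T : Lp I p →L[ℝ] Lp I p) : Prop :=
  ∀ f g : Lp I p, (∀ i, 0 ≤ f i) → (∀ i, 0 ≤ g i) → MajW f g → MajW (T f) (T g)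

/-- `T` preserves submajorization on the positive cone. -/
def PreservesMajS {I : Type*} {p : ℝ≥0∞} [Fact (1 ≤ p)]
    (T : Lp I p →L[ℝ] Lp I p) : Prop :=
  ∀ f g : Lp I p, (∀ i, 0 ≤ f i) → (∀ i, 0 ≤ g i) → MajS f g → MajS (T f) (T g)

end

section AuxProofs

open Filter Topology

variable {I : Type*} {p : ℝ≥0∞} [Fact (1 ≤ p)]

lemma aux_p_ne_zero : p ≠ 0 :=
  (lt_of_lt_of_le zero_lt_one (Fact.out : 1 ≤ p)).ne'

lemma stdVec_apply_self (j : I) : (stdVec p j : Lp I p) j = 1 := by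
  simp only [stdVec]
  convert lp.single_apply_self (E := fun _ : I => ℝ) p j (1:ℝ) using 2

lemma stdVec_apply_ne {j i : I} (h : i ≠ j) : (stdVec p j : Lp I p) i = 0 := by
  simp only [stdVec]
  convert lp.single_apply_ne (E := fun _ : I => ℝ) p j (1:ℝ) h using 2

lemma stdVec_nonneg (j i : I) : (0:ℝ) ≤ (stdVec p j : Lp I p) i := by
  rcases eq_or_ne i j with h | h
  · subst h; rw [stdVec_apply_self]; norm_num
  · rw [stdVec_apply_ne h]

lemma entry_nonneg {A : Lp I p →L[ℝ] Lp I p} (hA : IsPos A) (i j : I) :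
    0 ≤ A (stdVec p j) i :=
  hA _ (stdVec_nonneg j) i

/-- The evaluation-at-`i` continuous linear functional on `ℓᵖ(I)`. -/
noncomputable def evalCLM (i : I) : Lp I p →L[ℝ] ℝ :=
  LinearMap.mkContinuous
    { toFun := fun f : Lp I p => f i
      map_add' := fun f g => by exact congrFun (lp.coeFn_add f g) i
      map_smul' := fun c f => by exact congrFun (lp.coeFn_smul c f) i }
    1
    (fun f => by
      simpa using lp.norm_apply_le_norm (aux_p_ne_zero (p := p)) f i)

@[simp] lemma evalCLM_apply (i : I) (f : Lp I p) : (evalCLM i : Lp I p →L[ℝ] ℝ) f = f i := rfl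

/-- Pointwise matrix expansion of a bounded operator on `ℓᵖ(I)`. -/
lemma hasSum_entries (hp : p ≠ ∞) (A : Lp I p →L[ℝ] Lp I p) (g : Lp I p) (i : I) :
    HasSum (fun j : I => g j * A (stdVec p j) i) (A g i) := by
  classical
  have h0 : HasSum (fun j : I => lp.single p j (g j)) g := lp.hasSum_single hp g
  have h1 : HasSum (fun j : I => ((evalCLM i).comp A) (lp.single p j (g j)))
      (((evalCLM i).comp A) g) := ((evalCLM i).comp A).hasSum h0
  have key : ∀ j : I, ((evalCLM i).comp A) (lp.single p j (g j)) = g j * A (stdVec p j) i := by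
    intro j
    have : (lp.single p j (g j) : Lp I p) = g j • stdVec p j := by
      have := lp.single_smul (𝕜 := ℝ) (E := fun _ : I => ℝ) p j (g j) (1:ℝ)
      rw [smul_eq_mul, mul_one] at this
      rw [this, stdVec]
    rw [this]
    simp only [ContinuousLinearMap.comp_apply, map_smul, evalCLM_apply]
    rw [smul_eq_mul]
  simpa only [key, ContinuousLinearMap.comp_apply, evalCLM_apply] using h1

/-- Jensen's inequality for countable subconvex combinations in `ℝ≥0∞`. -/
lemma jensen_tsum {ι : Type*} (w z : ι → ℝ≥0∞) (hw : ∑' j, w j ≤ 1) {r : ℝ} (hr : 1 ≤ r) :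
    (∑' j, w j * z j) ^ r ≤ ∑' j, w j * z j ^ r := by
  have hr0 : (0:ℝ) < r := lt_of_lt_of_le zero_lt_one hr
  have hsum : HasSum (fun j => w j * z j) (∑' j, w j * z j) := ENNReal.summable.hasSum
  refine le_of_tendsto ((ENNReal.continuous_rpow_const (y := r)).continuousAt.tendsto.comp hsum) ?_
  filter_upwards with s
  simp only [Function.comp_apply]
  refine le_trans ?_ (ENNReal.sum_le_tsum s)
  set W := ∑ j ∈ s, w j with hW
  have hW1 : W ≤ 1 := (ENNReal.sum_le_tsum s).trans hw
  rcases eq_or_ne W 0 with h0 | h0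
  · have hz : ∀ j ∈ s, w j = 0 := by
      intro j hj
      exact (Finset.sum_eq_zero_iff.mp h0) j hj
    have : ∑ j ∈ s, w j * z j = 0 :=
      Finset.sum_eq_zero (fun j hj => by rw [hz j hj, zero_mul])
    rw [this, ENNReal.zero_rpow_of_pos hr0]
    exact zero_le
  · have hWtop : W ≠ ∞ := (hW1.trans_lt ENNReal.one_lt_top).ne
    have hsum1 : ∑ j ∈ s, w j / W = 1 := by
      simp only [div_eq_mul_inv, ← Finset.sum_mul]
      rw [← div_eq_mul_inv, ENNReal.div_self h0 hWtop]
    have key := ENNReal.rpow_arith_mean_le_arith_mean_rpow s (fun j => w j / W) z hsum1 hr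
    have lhs_eq : ∑ j ∈ s, (w j / W) * z j = (∑ j ∈ s, w j * z j) / W := by
      rw [div_eq_mul_inv, Finset.sum_mul]
      exact Finset.sum_congr rfl fun j _ => by rw [div_eq_mul_inv]; ring
    have rhs_eq : ∑ j ∈ s, (w j / W) * z j ^ r = (∑ j ∈ s, w j * z j ^ r) / W := by
      rw [div_eq_mul_inv, Finset.sum_mul]
      exact Finset.sum_congr rfl fun j _ => by rw [div_eq_mul_inv]; ring
    rw [lhs_eq, rhs_eq, ENNReal.div_rpow_of_nonneg _ _ hr0.le] at key
    -- key : (∑ wz)^r / W^r ≤ (∑ w z^r) / W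
    have hWr0 : W ^ r ≠ 0 := by
      simp [ENNReal.rpow_eq_zero_iff, h0, hWtop, hr0, hr0.ne', not_lt.mpr hr0.le]
    have hWrtop : W ^ r ≠ ∞ := by
      simp [ENNReal.rpow_eq_top_iff, h0, hWtop, hr0, not_lt.mpr hr0.le]
    calc (∑ j ∈ s, w j * z j) ^ r
        = ((∑ j ∈ s, w j * z j) ^ r / W ^ r) * W ^ r :=
          (ENNReal.div_mul_cancel hWr0 hWrtop).symm
      _ ≤ ((∑ j ∈ s, w j * z j ^ r) / W) * W ^ r := by
          exact mul_le_mul_left key _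
      _ = (∑ j ∈ s, w j * z j ^ r) * (W⁻¹ * W ^ r) := by
          rw [div_eq_mul_inv, mul_assoc]
      _ ≤ (∑ j ∈ s, w j * z j ^ r) * 1 := by
          refine mul_le_mul_right ?_ _
          have : W⁻¹ * W ^ r = W ^ (r - 1) := by
            rw [← ENNReal.rpow_neg_one W, ← ENNReal.rpow_add _ _ h0 hWtop]
            ring_nf
          rw [this]
          exact ENNReal.rpow_le_one hW1 (by linarith)
      _ = ∑ j ∈ s, w j * z j ^ r := mul_one _

/-- The Schur test: a doubly-substochastic-type operator decreases the
`ℝ≥0∞`-valued sum of `p`-th powers of a nonnegative vector. -/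
lemma schur_test (hp : p ≠ ∞) {A : Lp I p →L[ℝ] Lp I p} (hA : IsPos A)
    (hrow : ∀ i : I, ∑' j : I, ENNReal.ofReal (A (stdVec p j) i) ≤ 1)
    (hcol : ∀ j : I, ∑' i : I, ENNReal.ofReal (A (stdVec p j) i) ≤ 1)
    (h : Lp I p) (hh : ∀ i, 0 ≤ h i) :
    ∑' i : I, ENNReal.ofReal (A h i) ^ p.toReal
      ≤ ∑' j : I, ENNReal.ofReal (h j) ^ p.toReal := by
  set r := p.toReal with hrdef
  have hr : 1 ≤ r := by
    rw [hrdef, ← ENNReal.toReal_one]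
    exact ENNReal.toReal_mono hp (Fact.out : 1 ≤ p)
  have expand : ∀ i : I, ENNReal.ofReal (A h i)
      = ∑' j : I, ENNReal.ofReal (A (stdVec p j) i) * ENNReal.ofReal (h j) := by
    intro i
    have hs := hasSum_entries hp A h i
    have h1 : A h i = ∑' j : I, h j * A (stdVec p j) i := hs.tsum_eq.symm
    rw [h1, ENNReal.ofReal_tsum_of_nonneg
      (fun j => mul_nonneg (hh j) (entry_nonneg hA i j)) hs.summable]
    refine tsum_congr (fun j => ?_)
    rw [ENNReal.ofReal_mul (hh j), mul_comm]
  calc ∑' i : I, ENNReal.ofReal (A h i) ^ r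
      ≤ ∑' i : I, ∑' j : I, ENNReal.ofReal (A (stdVec p j) i) * ENNReal.ofReal (h j) ^ r := by
        refine ENNReal.tsum_le_tsum (fun i => ?_)
        rw [expand i]
        exact jensen_tsum _ _ (hrow i) hr
    _ = ∑' j : I, (∑' i : I, ENNReal.ofReal (A (stdVec p j) i)) * ENNReal.ofReal (h j) ^ r := by
        rw [ENNReal.tsum_comm]
        exact tsum_congr (fun j => ENNReal.tsum_mul_right)
    _ ≤ ∑' j : I, 1 * ENNReal.ofReal (h j) ^ r :=
        ENNReal.tsum_le_tsum (fun j => mul_le_mul_left (hcol j) _)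
    _ = ∑' j : I, ENNReal.ofReal (h j) ^ r := by simp

end AuxProofs

theorem stmt_3 {I : Type*} [Nonempty I] (p : ℝ≥0∞) [Fact (1 ≤ p)] (hp : p ≠ ∞)
    (f g : Lp I p) (hf : ∀ i, 0 ≤ f i) (hg : ∀ i, 0 ≤ g i)
    (h1 : MajS f g) (h2 : MajW g f) : Maj f g := by
  classical
  obtain ⟨D, ⟨hDpos, D₁, hD₁, hle⟩, hfD⟩ := h1
  obtain ⟨E, ⟨hEpos, hErow, hEcol⟩, hgE⟩ := h2
  obtain ⟨hD₁pos, hD₁row, hD₁col⟩ := hD₁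
  set r := p.toReal with hrdef
  have hr : 1 ≤ r := by
    rw [hrdef, ← ENNReal.toReal_one]
    exact ENNReal.toReal_mono hp (Fact.out : 1 ≤ p)
  have hr0 : (0:ℝ) < r := lt_of_lt_of_le zero_lt_one hr
  -- Step 1 : pointwise `f i ≤ D₁ g i`
  have step1 : ∀ i, f i ≤ D₁ g i := by
    intro i
    have hD : HasSum (fun j : I => g j * D (stdVec p j) i) (f i) := by
      rw [hfD]; exact hasSum_entries hp D g i
    have hD₁ : HasSum (fun j : I => g j * D₁ (stdVec p j) i) (D₁ g i) :=
      hasSum_entries hp D₁ g i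
    exact hasSum_le (fun j => mul_le_mul_of_nonneg_left (hle i j) (hg j)) hD hD₁
  -- the `ℝ≥0∞`-valued functional `Φ`
  set Φ : Lp I p → ℝ≥0∞ := fun h => ∑' i : I, ENNReal.ofReal (h i) ^ r with hΦ
  -- sub-stochasticity data in `ℝ≥0∞` form
  have hErow' : ∀ i : I, ∑' j : I, ENNReal.ofReal (E (stdVec p j) i) ≤ 1 := by
    intro i
    refine Summable.tsum_le_of_sum_le ENNReal.summable (fun s => ?_)
    rw [← ENNReal.ofReal_sum_of_nonneg (fun j _ => entry_nonneg hEpos i j)]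
    exact ENNReal.ofReal_le_one.mpr (hErow i s)
  have hEcol' : ∀ j : I, ∑' i : I, ENNReal.ofReal (E (stdVec p j) i) ≤ 1 := by
    intro j
    refine Summable.tsum_le_of_sum_le ENNReal.summable (fun s => ?_)
    rw [← ENNReal.ofReal_sum_of_nonneg (fun i _ => entry_nonneg hEpos i j)]
    exact ENNReal.ofReal_le_one.mpr (hEcol j s)
  have hD₁row' : ∀ i : I, ∑' j : I, ENNReal.ofReal (D₁ (stdVec p j) i) ≤ 1 := by
    intro i
    rw [← ENNReal.ofReal_tsum_of_nonneg (fun j => entry_nonneg hD₁pos i j)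
      (hD₁row i).summable, (hD₁row i).tsum_eq]
    simp
  have hD₁col' : ∀ j : I, ∑' i : I, ENNReal.ofReal (D₁ (stdVec p j) i) ≤ 1 := by
    intro j
    rw [← ENNReal.ofReal_tsum_of_nonneg (fun i => entry_nonneg hD₁pos i j)
      (hD₁col j).summable, (hD₁col j).tsum_eq]
    simp
  -- Step 2 : the chain of inequalities for Φ
  have chain1 : Φ g ≤ Φ f := by
    have := schur_test hp hEpos hErow' hEcol' f hf
    rw [← hgE] at this
    exact this
  have chain2 : Φ f ≤ Φ (D₁ g) := by
    refine ENNReal.tsum_le_tsum (fun i => ?_)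
    exact ENNReal.rpow_le_rpow (ENNReal.ofReal_le_ofReal (step1 i)) hr0.le
  have chain3 : Φ (D₁ g) ≤ Φ g := schur_test hp hD₁pos hD₁row' hD₁col' g hg
  -- Φ g is finite
  have hgfin : Φ g ≠ ∞ := by
    have hsumm : Summable (fun i : I => ‖g i‖ ^ r) :=
      (lp.memℓp g).summable (ENNReal.toReal_pos (aux_p_ne_zero (p := p)) hp)
    have : Φ g = ENNReal.ofReal (∑' i : I, ‖g i‖ ^ r) := by
      rw [ENNReal.ofReal_tsum_of_nonneg (fun i => by positivity) hsumm]
      refine tsum_congr (fun i => ?_)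
      rw [Real.norm_eq_abs, abs_of_nonneg (hg i),
        ← ENNReal.ofReal_rpow_of_nonneg (hg i) hr0.le]
    rw [this]
    exact ENNReal.ofReal_ne_top
  -- equality of the `p`-th power sums
  have heq : Φ f = Φ (D₁ g) :=
    le_antisymm chain2 (by
      calc Φ (D₁ g) ≤ Φ g := chain3
        _ ≤ Φ f := chain1)
  have hffin : Φ f ≠ ∞ := by
    rw [heq]
    exact ne_top_of_le_ne_top hgfin chain3
  -- pointwise equality
  have ptwise : ∀ i, f i = D₁ g i := by
    intro i
    by_contra hne
    have hlt : ENNReal.ofReal (f i) ^ r < ENNReal.ofReal (D₁ g i) ^ r := by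
      have h1 : ENNReal.ofReal (f i) < ENNReal.ofReal (D₁ g i) := by
        refine ENNReal.ofReal_lt_ofReal_iff_of_nonneg (hf i) |>.mpr ?_
        exact lt_of_le_of_ne (step1 i) hne
      exact ENNReal.rpow_lt_rpow h1 hr0
    have : Φ f < Φ (D₁ g) :=
      ENNReal.tsum_lt_tsum hffin
        (fun j => ENNReal.rpow_le_rpow (ENNReal.ofReal_le_ofReal (step1 j)) hr0.le) hlt
    exact absurd heq this.ne
  refine ⟨D₁, ⟨hD₁pos, hD₁row, hD₁col⟩, ?_⟩
  exact lp.ext (funext ptwise)
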